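/- Let q ≥ 1 and let F : ℝ^q → ℝ be differentiable and μ-smooth for some μ > 0, and bounded below by F_*. Let (Ω, 𝔽, P) be a probability space, let η satisfy 0 < η ≤ 1/μ, let g^(0), …, g^(N−1) : Ω → ℝ^q be random vectors, let w^(0) ∈ ℝ^q be a fixed initial point, and define recursively the random iterates w^(i+1) = w^(i) − η g^(i) for i = 0, …, N−1. Assume all integrands below are integrable. Then E[(1/N) Σ_{i=0}^{N−1} ‖∇F(w^(i))‖²] ≤ 2(F(w^(0)) − F_*)/(η N) + (1/N) Σ_{i=0}^{N−1} E[‖g^(i) − ∇F(w^(i))‖²]. -/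

import Mathlib

open MeasureTheory Finset

/-- **Proposition 1** (convergence rate bounded by average global gradient deviation).
Let `F : ℝ^q → ℝ` be differentiable, `μ`-smooth and bounded below by `Fstar`.  For a learning
rate `0 < η ≤ 1/μ`, random gradients `g⁽⁰⁾, …, g⁽ᴺ⁻¹⁾` and the SGD iterates
`w⁽ⁱ⁺¹⁾ = w⁽ⁱ⁾ − η g⁽ⁱ⁾` started at a fixed `w⁽⁰⁾`, the expected average squared gradient norm is
bounded by `2(F(w⁽⁰⁾) − F⋆)/(ηN)` plus the average global gradient deviation. -/
theorem convergence_rate_bounded_by_global_gradient_deviation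
    {q N : ℕ} (hq : 1 ≤ q) (hN : 0 < N)
    (F : EuclideanSpace ℝ (Fin q) → ℝ) (μ : ℝ) (hμ : 0 < μ)
    (hFdiff : Differentiable ℝ F)
    (hsmooth : ∀ u v : EuclideanSpace ℝ (Fin q),
      F u ≤ F v + @inner ℝ _ _ (gradient F v) (u - v) + μ / 2 * ‖u - v‖ ^ 2)
    (Fstar : ℝ) (hbdd : ∀ x : EuclideanSpace ℝ (Fin q), Fstar ≤ F x)
    {Ω : Type*} [MeasurableSpace Ω] (P : Measure Ω) [IsProbabilityMeasure P]
    (η : ℝ) (hη0 : 0 < η) (hη : η ≤ 1 / μ)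
    (g : ℕ → Ω → EuclideanSpace ℝ (Fin q))
    (w0 : EuclideanSpace ℝ (Fin q))
    (w : ℕ → Ω → EuclideanSpace ℝ (Fin q))
    (hw0 : ∀ ω : Ω, w 0 ω = w0)
    (hwrec : ∀ i : ℕ, ∀ ω : Ω, w (i + 1) ω = w i ω - η • g i ω)
    (hint1 : ∀ i ∈ Finset.range N,
      Integrable (fun ω : Ω => ‖gradient F (w i ω)‖ ^ 2) P)
    (hint2 : ∀ i ∈ Finset.range N,
      Integrable (fun ω : Ω => ‖g i ω - gradient F (w i ω)‖ ^ 2) P) :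
    (∫ ω : Ω, (1 / (N : ℝ)) * ∑ i ∈ Finset.range N, ‖gradient F (w i ω)‖ ^ 2 ∂P) ≤
      2 * (F w0 - Fstar) / (η * N) +
        (1 / (N : ℝ)) * ∑ i ∈ Finset.range N,
          ∫ ω : Ω, ‖g i ω - gradient F (w i ω)‖ ^ 2 ∂P := by
  have hμη : μ * η ≤ 1 := by
    rw [le_div_iff₀ hμ] at hη; linarith
  -- per-step inequality
  have step : ∀ i : ℕ, ∀ ω : Ω,
      η / 2 * ‖gradient F (w i ω)‖ ^ 2 ≤
        F (w i ω) - F (w (i + 1) ω) + η / 2 * ‖g i ω - gradient F (w i ω)‖ ^ 2 := by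
    intro i ω
    rw [hwrec i ω]
    set a := gradient F (w i ω) with ha
    set b := g i ω with hb
    have hsm := hsmooth (w (i + 1) ω) (w i ω)
    rw [hwrec i ω] at hsm
    have h1 : w i ω - η • b - w i ω = -(η • b) := by abel
    rw [h1, inner_neg_right, real_inner_smul_right, norm_neg, norm_smul] at hsm
    have hinner : @inner ℝ _ _ a b = (‖a‖ ^ 2 + ‖b‖ ^ 2 - ‖a - b‖ ^ 2) / 2 := by
      have := @norm_sub_sq_real (EuclideanSpace ℝ (Fin q)) _ _ a b
      linarith
    have hnb : ‖η • b‖ = |η| * ‖b‖ := norm_smul _ _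
    have hη' : ‖(η : ℝ)‖ = η := by simp [abs_of_pos hη0]
    rw [hη'] at hsm
    have hba : ‖a - b‖ ^ 2 = ‖b - a‖ ^ 2 := by rw [norm_sub_rev]
    have hpos : (0:ℝ) ≤ (1 - μ * η) * η * ‖b‖ ^ 2 :=
      mul_nonneg (mul_nonneg (by linarith) hη0.le) (sq_nonneg _)
    nlinarith [hsm, hinner]
  -- pointwise summed inequality
  have key : ∀ ω : Ω,
      ∑ i ∈ Finset.range N, ‖gradient F (w i ω)‖ ^ 2 ≤
        2 * (F w0 - Fstar) / η + ∑ i ∈ Finset.range N, ‖g i ω - gradient F (w i ω)‖ ^ 2 := by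
    intro ω
    have hsum : ∑ i ∈ Finset.range N, (η / 2 * ‖gradient F (w i ω)‖ ^ 2) ≤
        F (w 0 ω) - F (w N ω) +
          ∑ i ∈ Finset.range N, (η / 2 * ‖g i ω - gradient F (w i ω)‖ ^ 2) := by
      calc ∑ i ∈ Finset.range N, (η / 2 * ‖gradient F (w i ω)‖ ^ 2)
          ≤ ∑ i ∈ Finset.range N, (F (w i ω) - F (w (i + 1) ω) +
              η / 2 * ‖g i ω - gradient F (w i ω)‖ ^ 2) := Finset.sum_le_sum (fun i _ => step i ω)
        _ = ∑ i ∈ Finset.range N, (F (w i ω) - F (w (i + 1) ω)) +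
              ∑ i ∈ Finset.range N, (η / 2 * ‖g i ω - gradient F (w i ω)‖ ^ 2) :=
            Finset.sum_add_distrib
        _ = F (w 0 ω) - F (w N ω) +
              ∑ i ∈ Finset.range N, (η / 2 * ‖g i ω - gradient F (w i ω)‖ ^ 2) := by
            rw [Finset.sum_range_sub' (fun i => F (w i ω))]
    rw [hw0 ω] at hsum
    have hb := hbdd (w N ω)
    rw [← Finset.mul_sum, ← Finset.mul_sum] at hsum
    have h2 : (∑ i ∈ Finset.range N, ‖gradient F (w i ω)‖ ^ 2) -
        (∑ i ∈ Finset.range N, ‖g i ω - gradient F (w i ω)‖ ^ 2) ≤ 2 * (F w0 - Fstar) / η := by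
      rw [le_div_iff₀ hη0]
      nlinarith
    linarith
  -- integrate
  have hintL : Integrable (fun ω : Ω => ∑ i ∈ Finset.range N, ‖gradient F (w i ω)‖ ^ 2) P :=
    integrable_finset_sum _ hint1
  have hintR : Integrable (fun ω : Ω => 2 * (F w0 - Fstar) / η +
      ∑ i ∈ Finset.range N, ‖g i ω - gradient F (w i ω)‖ ^ 2) P :=
    (integrable_const _).add (integrable_finset_sum _ hint2)
  have hmono := integral_mono hintL hintR key
  rw [integral_add (integrable_const _) (integrable_finset_sum _ hint2),
    integral_const, integral_finset_sum _ hint2] at hmono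
  have hNpos : (0 : ℝ) < N := by exact_mod_cast hN
  rw [MeasureTheory.integral_const_mul]
  simp only [probReal_univ, measure_univ, one_smul] at hmono
  have hfin : (1 / (N : ℝ)) * (2 * (F w0 - Fstar) / η +
      ∑ i ∈ Finset.range N, ∫ ω, ‖g i ω - gradient F (w i ω)‖ ^ 2 ∂P) =
      2 * (F w0 - Fstar) / (η * N) +
        (1 / (N : ℝ)) * ∑ i ∈ Finset.range N, ∫ ω, ‖g i ω - gradient F (w i ω)‖ ^ 2 ∂P := by
    field_simp
  calc (1 / (N : ℝ)) * ∫ ω, ∑ i ∈ Finset.range N, ‖gradient F (w i ω)‖ ^ 2 ∂P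
      ≤ (1 / (N : ℝ)) * (2 * (F w0 - Fstar) / η +
          ∑ i ∈ Finset.range N, ∫ ω, ‖g i ω - gradient F (w i ω)‖ ^ 2 ∂P) := by
        apply mul_le_mul_of_nonneg_left hmono (by positivity)
    _ = _ := hfin
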